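/- arXiv:2101.05780 — 2 statements merged into one kernel-verified Lean document; each statement's English description precedes it below -/
import Mathlib

section
/- Let X be a real random variable with E[X]=0, E[X^2]=σ^2, and E[|X|^3] finite, and let f be its characteristic function. Then for all real t, |f(t) - exp(-σ^2 t^2 / 2)| ≤ E[|X|^3] * |t|^3 / 6. -/
open MeasureTheory Complex intervalIntegral


lemma hasDerivAt_mul_abs (c : ℝ) : HasDerivAt (fun y : ℝ => y * |y| / 2) |c| c := by
  rcases lt_trichotomy c 0 with hc | hc | hc
  · have heq : ∀ᶠ y in nhds c, y * |y| / 2 = -(y^2)/2 := by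
      filter_upwards [eventually_lt_nhds hc] with y hy
      rw [_root_.abs_of_neg hy]; ring
    have h2 : HasDerivAt (fun y : ℝ => -(y^2)/2) (-c) c := by
      have := (hasDerivAt_pow 2 c).neg.div_const 2
      norm_num at this
      exact this.congr_deriv (by ring)
    rw [_root_.abs_of_neg hc]
    exact h2.congr_of_eventuallyEq heq
  · subst hc
    have : HasDerivAt (fun y : ℝ => y * |y| / 2) 0 0 := by
      rw [hasDerivAt_iff_isLittleO]
      simp only [sub_zero, mul_zero, zero_mul, abs_zero, zero_div, smul_eq_mul]
      rw [Asymptotics.isLittleO_iff]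
      intro ε hε
      filter_upwards [Metric.ball_mem_nhds (0:ℝ) (by positivity : (0:ℝ) < 2*ε)] with y hy
      simp only [Real.norm_eq_abs, Metric.mem_ball, Real.dist_eq, sub_zero] at hy ⊢
      rw [abs_div, abs_mul, _root_.abs_abs]
      rw [show |(2:ℝ)| = 2 by norm_num]
      nlinarith [abs_nonneg y]
    simpa using this
  · have heq : ∀ᶠ y in nhds c, y * |y| / 2 = (y^2)/2 := by
      filter_upwards [eventually_gt_nhds hc] with y hy
      rw [_root_.abs_of_pos hy]; ring
    have h2 : HasDerivAt (fun y : ℝ => (y^2)/2) c c := by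
      have := (hasDerivAt_pow 2 c).div_const 2
      norm_num at this
      convert this using 1
    rw [_root_.abs_of_pos hc]
    exact h2.congr_of_eventuallyEq heq

lemma integral_abs_eq (s t : ℝ) : (∫ y in s..t, |y|) = t * |t| / 2 - s * |s| / 2 :=
  integral_eq_sub_of_hasDerivAt (fun y _ => hasDerivAt_mul_abs y)
    (continuous_abs.intervalIntegrable s t)

lemma mul_abs_mono {s t : ℝ} (h : s ≤ t) : s * |s| ≤ t * |t| := by
  rcases le_or_gt 0 s with hs | hs
  · rw [_root_.abs_of_nonneg hs, _root_.abs_of_nonneg (hs.trans h)]; nlinarith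
  · rcases le_or_gt 0 t with ht | ht
    · rw [_root_.abs_of_neg hs, _root_.abs_of_nonneg ht]; nlinarith
    · rw [_root_.abs_of_neg hs, _root_.abs_of_neg ht]; nlinarith

noncomputable def cf (a x : ℝ) : ℂ := Complex.exp (a * x * Complex.I)

lemma cf_deriv (a : ℝ) (x : ℝ) :
    HasDerivAt (fun y : ℝ => cf a y) ((a : ℂ) * I * cf a x) x := by
  have h0 : HasDerivAt (fun y : ℝ => (y : ℂ)) 1 x := Complex.ofRealCLM.hasDerivAt
  have h1 : HasDerivAt (fun y : ℝ => (a : ℂ) * (y : ℂ) * I) ((a:ℂ) * I) x := by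
    have := (h0.const_mul (a : ℂ)).mul_const I
    simpa using this
  simpa [cf, mul_comm] using h1.cexp

lemma cf_cont (a : ℝ) : Continuous fun x : ℝ => cf a x := by
  unfold cf; fun_prop

lemma norm_cf (a x : ℝ) : ‖cf a x‖ = 1 := by
  rw [cf]
  have : ((a:ℂ) * x * I) = ((a*x : ℝ) : ℂ) * I := by push_cast; ring
  rw [this]
  exact Complex.norm_exp_ofReal_mul_I _

lemma interval_closed_form {a : ℝ} (ha : a ≠ 0) (s t : ℝ) :
    (∫ x in s..t, ((s + t - x : ℝ) : ℂ) * cf a x)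
      = (-I/(a:ℂ)) * (s * cf a t - t * cf a s) - (1/(a:ℂ)^2) * (cf a t - cf a s) := by
  have hA : (a : ℂ) ≠ 0 := by exact_mod_cast ha
  have hderiv : ∀ x : ℝ, HasDerivAt
      (fun y : ℝ => cf a y * ((-I*((s:ℂ)+(t:ℂ)-(y:ℂ))*(a:ℂ) - 1) / (a:ℂ)^2))
      (((s + t - x : ℝ) : ℂ) * cf a x) x := by
    intro x
    have h0 : HasDerivAt (fun y : ℝ => (y : ℂ)) 1 x := Complex.ofRealCLM.hasDerivAt
    have h1 : HasDerivAt (fun y : ℝ => (s:ℂ)+(t:ℂ)-(y:ℂ)) (-1) x := by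
      simpa using h0.const_sub ((s:ℂ)+(t:ℂ))
    have h2 : HasDerivAt (fun y : ℝ => (-I*((s:ℂ)+(t:ℂ)-(y:ℂ))*(a:ℂ) - 1) / (a:ℂ)^2)
        ((I*(a:ℂ))/(a:ℂ)^2) x := by
      have := (((h1.const_mul (-I)).mul_const (a:ℂ)).sub_const 1).div_const ((a:ℂ)^2)
      exact this.congr_deriv (by ring)
    have h3 := (cf_deriv a x).mul h2
    refine h3.congr_deriv (Eq.symm ?_)
    have key : ((a:ℂ) * I) * ((-I*((s:ℂ)+(t:ℂ)-(x:ℂ))*(a:ℂ) - 1) / (a:ℂ)^2)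
        + (I*(a:ℂ))/(a:ℂ)^2 = ((s + t - x : ℝ) : ℂ) := by
      field_simp
      ring_nf
      simp only [Complex.I_sq]
      push_cast
      ring
    calc ((s + t - x : ℝ) : ℂ) * cf a x
        = (((a:ℂ) * I) * ((-I*((s:ℂ)+(t:ℂ)-(x:ℂ))*(a:ℂ) - 1) / (a:ℂ)^2)
            + (I*(a:ℂ))/(a:ℂ)^2) * cf a x := by rw [key]
      _ = _ := by ring
  have hcont : IntervalIntegrable (fun x : ℝ => ((s + t - x : ℝ) : ℂ) * cf a x) volume s t := by
    apply Continuous.intervalIntegrable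
    apply Continuous.mul _ (cf_cont a)
    fun_prop
  have := integral_eq_sub_of_hasDerivAt (fun x _ => hderiv x) hcont
  rw [this]
  push_cast
  field_simp
  ring

lemma pointwise_bound {a : ℝ} (ha : a ≠ 0) (s t : ℝ) :
    ‖((t:ℂ) - (s:ℂ)) * ((-I/(a:ℂ)) * (s * cf a t - t * cf a s)
        - (1/(a:ℂ)^2) * (cf a t - cf a s))‖
      ≤ (t - s) * (t * |t| - s * |s|) / 2 := by
  rw [norm_mul, ← interval_closed_form ha s t]
  have h1 : ‖∫ x in s..t, ((s + t - x : ℝ) : ℂ) * cf a x‖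
      ≤ |(∫ x in s..t, _root_.abs (s + t - x))| := by
    have h := intervalIntegral.norm_integral_le_abs_integral_norm
      (f := fun x : ℝ => ((s + t - x : ℝ) : ℂ) * cf a x) (a := s) (b := t) (μ := volume)
    have heq : (∫ x in s..t, ‖((s + t - x : ℝ) : ℂ) * cf a x‖)
        = ∫ x in s..t, _root_.abs (s + t - x) := by
      apply intervalIntegral.integral_congr
      intro x _
      show ‖((s + t - x : ℝ) : ℂ) * cf a x‖ = _
      rw [norm_mul, norm_cf, mul_one, Complex.norm_real, Real.norm_eq_abs]
    rwa [heq] at h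
  have h2 : (∫ x in s..t, _root_.abs (s + t - x)) = t * |t| / 2 - s * |s| / 2 := by
    have := intervalIntegral.integral_comp_sub_left (a := s) (b := t)
      (fun y : ℝ => |y|) (s + t)
    simp only [add_sub_cancel_right, add_sub_cancel_left] at this
    rw [this, integral_abs_eq]
  have h3 : ‖(t:ℂ) - (s:ℂ)‖ = |t - s| := by
    rw [show (t:ℂ) - (s:ℂ) = ((t - s : ℝ) : ℂ) by push_cast; ring, Complex.norm_real,
      Real.norm_eq_abs]
  rw [h3]
  calc |t - s| * ‖∫ x in s..t, ((s + t - x : ℝ) : ℂ) * cf a x‖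
      ≤ |t - s| * |t * |t| / 2 - s * |s| / 2| := by
        apply mul_le_mul_of_nonneg_left _ (abs_nonneg _)
        rw [← h2]; exact h1
    _ = (t - s) * (t * |t| - s * |s|) / 2 := by
        rcases le_total s t with h | h
        · rw [_root_.abs_of_nonneg (sub_nonneg.2 h),
            _root_.abs_of_nonneg (by linarith [mul_abs_mono h] : (0:ℝ) ≤ t * |t| / 2 - s * |s| / 2)]
          ring
        · rw [_root_.abs_of_nonpos (sub_nonpos.2 h),
            _root_.abs_of_nonpos (by linarith [mul_abs_mono h] : t * |t| / 2 - s * |s| / 2 ≤ 0)]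
          ring

lemma cube_cert (x : ℝ) : x^2 + |x| ≤ 1 + |x|^3 := by
  nlinarith [mul_nonneg (sq_nonneg (|x|-1)) (abs_nonneg x), sq_nonneg (|x|-1),
    _root_.sq_abs x, abs_nonneg x]


section KeyAB
variable (μ : Measure ℝ) [IsProbabilityMeasure μ]

lemma keyA (hcent : ∫ x, x ∂μ = 0) (hint : Integrable (fun x => |x|^3) μ) (a : ℝ) :
    ‖I * (∫ x, (x:ℂ) * cf a x ∂μ)
        + (a:ℂ) * (((∫ x, x^2 ∂μ : ℝ)):ℂ) * (∫ x, cf a x ∂μ)‖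
      ≤ (∫ x, |x|^3 ∂μ) * a^2 / 2 := by
  -- basic integrability
  have hbound : Integrable (fun x => 1 + |x|^3) μ := (integrable_const 1).add hint
  have habs : Integrable (fun x => |x|) μ := by
    refine hbound.mono' continuous_abs.aestronglyMeasurable ?_
    filter_upwards with x
    rw [Real.norm_eq_abs, _root_.abs_abs]
    nlinarith [cube_cert x, sq_nonneg x]
  have hx : Integrable (fun x : ℝ => x) μ := by
    refine hbound.mono' aestronglyMeasurable_id ?_
    filter_upwards with x
    rw [Real.norm_eq_abs]; nlinarith [cube_cert x, sq_nonneg x]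
  have hsq : Integrable (fun x : ℝ => x^2) μ := by
    refine hbound.mono' (continuous_pow 2).aestronglyMeasurable ?_
    filter_upwards with x
    rw [Real.norm_eq_abs, _root_.abs_of_nonneg (sq_nonneg x)]
    nlinarith [cube_cert x, abs_nonneg x]
  have hxabs : Integrable (fun x : ℝ => x * |x|) μ := by
    refine hbound.mono' (continuous_id.mul continuous_abs).aestronglyMeasurable ?_
    filter_upwards with x
    rw [Real.norm_eq_abs, abs_mul, _root_.abs_abs]
    nlinarith [cube_cert x, abs_nonneg x, _root_.sq_abs x, sq_nonneg x]
  have hC1 : Integrable (fun x : ℝ => (x:ℂ)) μ := by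
    refine habs.mono' Complex.continuous_ofReal.aestronglyMeasurable ?_
    filter_upwards with x
    rw [Complex.norm_real, Real.norm_eq_abs]
  have hCsq : Integrable (fun x : ℝ => (x:ℂ)^2) μ := by
    refine hsq.mono' (Complex.continuous_ofReal.pow 2).aestronglyMeasurable ?_
    filter_upwards with x
    rw [← Complex.ofReal_pow, Complex.norm_real, Real.norm_eq_abs,
      _root_.abs_of_nonneg (sq_nonneg x)]
  have hCcf : Integrable (fun x : ℝ => cf a x) μ := by
    refine (integrable_const (1:ℝ)).mono' (cf_cont a).aestronglyMeasurable ?_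
    filter_upwards with x
    rw [norm_cf]
  have hCxcf : Integrable (fun x : ℝ => (x:ℂ) * cf a x) μ := by
    refine habs.mono' (Complex.continuous_ofReal.mul (cf_cont a)).aestronglyMeasurable ?_
    filter_upwards with x
    rw [norm_mul, norm_cf, mul_one, Complex.norm_real, Real.norm_eq_abs]
  -- notation
  set Fa : ℂ := ∫ x, cf a x ∂μ with hFa
  set Da : ℂ := ∫ x, (x:ℂ) * cf a x ∂μ with hDa
  set V : ℝ := ∫ x, x^2 ∂μ with hV
  set β : ℝ := ∫ x, |x|^3 ∂μ with hβ
  have hCint0 : (∫ x, (x:ℂ) ∂μ) = 0 := by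
    have h' : (∫ x, (x:ℂ) ∂μ) = ((∫ x, x ∂μ : ℝ) : ℂ) := integral_ofReal
    rw [h', hcent, Complex.ofReal_zero]
  have hCsqV : (∫ x, (x:ℂ)^2 ∂μ) = (V:ℂ) := by
    have h' : (∫ x, (x:ℂ)^2 ∂μ) = ((∫ x, x^2 ∂μ : ℝ) : ℂ) := by
      rw [show (fun x : ℝ => (x:ℂ)^2) = (fun x : ℝ => ((x^2 : ℝ) : ℂ)) from
        funext fun x => by push_cast; ring]
      exact integral_ofReal
    rw [h', hV]
  rcases eq_or_ne a 0 with rfl | ha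
  · simp only [Complex.ofReal_zero, zero_mul, add_zero]
    have hDa0 : Da = 0 := by
      rw [hDa, show (fun x : ℝ => (x:ℂ) * cf 0 x) = fun x : ℝ => (x:ℂ) by
        funext x; simp [cf]]
      exact hCint0
    simp [hDa0]
  have haC : (a:ℂ) ≠ 0 := by exact_mod_cast ha
  -- the pair function and its monomials
  set H : ℝ × ℝ → ℂ := fun p =>
    ((p.2:ℂ) - (p.1:ℂ)) * ((-I/(a:ℂ)) * ((p.1:ℂ) * cf a p.2 - (p.2:ℂ) * cf a p.1)
      - (1/(a:ℂ)^2) * (cf a p.2 - cf a p.1)) with hH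
  set B1 : ℝ × ℝ → ℂ := fun p =>
    (p.1:ℂ) * ((p.2:ℂ) * cf a p.2) - (p.1:ℂ)^2 * cf a p.2
      - cf a p.1 * (p.2:ℂ)^2 + ((p.1:ℂ) * cf a p.1) * (p.2:ℂ) with hB1
  set B2 : ℝ × ℝ → ℂ := fun p =>
    (1:ℂ) * ((p.2:ℂ) * cf a p.2) - (p.1:ℂ) * cf a p.2
      - cf a p.1 * (p.2:ℂ) + ((p.1:ℂ) * cf a p.1) * (1:ℂ) with hB2
  have hHexp : ∀ p : ℝ × ℝ, H p = (-I/(a:ℂ)) * B1 p - (1/(a:ℂ)^2) * B2 p := by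
    intro p; rw [hH, hB1, hB2]; ring
  have i1 : Integrable (fun p : ℝ × ℝ => (p.1:ℂ) * ((p.2:ℂ) * cf a p.2)) (μ.prod μ) :=
    hC1.mul_prod hCxcf
  have i2 : Integrable (fun p : ℝ × ℝ => (p.1:ℂ)^2 * cf a p.2) (μ.prod μ) :=
    hCsq.mul_prod hCcf
  have i3 : Integrable (fun p : ℝ × ℝ => cf a p.1 * (p.2:ℂ)^2) (μ.prod μ) :=
    hCcf.mul_prod hCsq
  have i4 : Integrable (fun p : ℝ × ℝ => ((p.1:ℂ) * cf a p.1) * (p.2:ℂ)) (μ.prod μ) :=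
    hCxcf.mul_prod hC1
  have i5 : Integrable (fun p : ℝ × ℝ => (1:ℂ) * ((p.2:ℂ) * cf a p.2)) (μ.prod μ) :=
    (integrable_const (1:ℂ)).mul_prod hCxcf
  have i6 : Integrable (fun p : ℝ × ℝ => (p.1:ℂ) * cf a p.2) (μ.prod μ) :=
    hC1.mul_prod hCcf
  have i7 : Integrable (fun p : ℝ × ℝ => cf a p.1 * (p.2:ℂ)) (μ.prod μ) :=
    hCcf.mul_prod hC1
  have i8 : Integrable (fun p : ℝ × ℝ => ((p.1:ℂ) * cf a p.1) * (1:ℂ)) (μ.prod μ) :=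
    hCxcf.mul_prod (integrable_const (1:ℂ))
  have i12 : Integrable (fun p : ℝ × ℝ => (p.1:ℂ) * ((p.2:ℂ) * cf a p.2)
      - (p.1:ℂ)^2 * cf a p.2) (μ.prod μ) := by exact i1.sub i2
  have i123 : Integrable (fun p : ℝ × ℝ => (p.1:ℂ) * ((p.2:ℂ) * cf a p.2)
      - (p.1:ℂ)^2 * cf a p.2 - cf a p.1 * (p.2:ℂ)^2) (μ.prod μ) := by exact i12.sub i3
  have jB1 : Integrable B1 (μ.prod μ) := by rw [hB1]; exact i123.add i4
  have i56 : Integrable (fun p : ℝ × ℝ => (1:ℂ) * ((p.2:ℂ) * cf a p.2)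
      - (p.1:ℂ) * cf a p.2) (μ.prod μ) := by exact i5.sub i6
  have i567 : Integrable (fun p : ℝ × ℝ => (1:ℂ) * ((p.2:ℂ) * cf a p.2)
      - (p.1:ℂ) * cf a p.2 - cf a p.1 * (p.2:ℂ)) (μ.prod μ) := by exact i56.sub i7
  have jB2 : Integrable B2 (μ.prod μ) := by rw [hB2]; exact i567.add i8
  have jcB1 : Integrable (fun p : ℝ × ℝ => (-I/(a:ℂ)) * B1 p) (μ.prod μ) := by
    exact jB1.const_mul _
  have jcB2 : Integrable (fun p : ℝ × ℝ => (1/(a:ℂ)^2) * B2 p) (μ.prod μ) := by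
    exact jB2.const_mul _
  have hHint : Integrable H (μ.prod μ) := by
    rw [show H = (fun p : ℝ × ℝ => (-I/(a:ℂ)) * B1 p - (1/(a:ℂ)^2) * B2 p) from
      funext hHexp]
    exact jcB1.sub jcB2
  -- monomial integral values
  have e1 : (∫ p : ℝ × ℝ, (p.1:ℂ) * ((p.2:ℂ) * cf a p.2) ∂(μ.prod μ))
      = (∫ x, (x:ℂ) ∂μ) * ∫ x, (x:ℂ) * cf a x ∂μ :=
    integral_prod_mul (fun x : ℝ => (x:ℂ)) (fun y : ℝ => (y:ℂ) * cf a y)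
  have e2 : (∫ p : ℝ × ℝ, (p.1:ℂ)^2 * cf a p.2 ∂(μ.prod μ))
      = (∫ x, (x:ℂ)^2 ∂μ) * ∫ x, cf a x ∂μ :=
    integral_prod_mul (fun x : ℝ => (x:ℂ)^2) (fun y : ℝ => cf a y)
  have e3 : (∫ p : ℝ × ℝ, cf a p.1 * (p.2:ℂ)^2 ∂(μ.prod μ))
      = (∫ x, cf a x ∂μ) * ∫ x, (x:ℂ)^2 ∂μ :=
    integral_prod_mul (fun x : ℝ => cf a x) (fun y : ℝ => (y:ℂ)^2)
  have e4 : (∫ p : ℝ × ℝ, ((p.1:ℂ) * cf a p.1) * (p.2:ℂ) ∂(μ.prod μ))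
      = (∫ x, (x:ℂ) * cf a x ∂μ) * ∫ x, (x:ℂ) ∂μ :=
    integral_prod_mul (fun x : ℝ => (x:ℂ) * cf a x) (fun y : ℝ => (y:ℂ))
  have e5 : (∫ p : ℝ × ℝ, (1:ℂ) * ((p.2:ℂ) * cf a p.2) ∂(μ.prod μ))
      = (∫ _x : ℝ, (1:ℂ) ∂μ) * ∫ x, (x:ℂ) * cf a x ∂μ :=
    integral_prod_mul (fun _ : ℝ => (1:ℂ)) (fun y : ℝ => (y:ℂ) * cf a y)
  have e6 : (∫ p : ℝ × ℝ, (p.1:ℂ) * cf a p.2 ∂(μ.prod μ))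
      = (∫ x, (x:ℂ) ∂μ) * ∫ x, cf a x ∂μ :=
    integral_prod_mul (fun x : ℝ => (x:ℂ)) (fun y : ℝ => cf a y)
  have e7 : (∫ p : ℝ × ℝ, cf a p.1 * (p.2:ℂ) ∂(μ.prod μ))
      = (∫ x, cf a x ∂μ) * ∫ x, (x:ℂ) ∂μ :=
    integral_prod_mul (fun x : ℝ => cf a x) (fun y : ℝ => (y:ℂ))
  have e8 : (∫ p : ℝ × ℝ, ((p.1:ℂ) * cf a p.1) * (1:ℂ) ∂(μ.prod μ))
      = (∫ x, (x:ℂ) * cf a x ∂μ) * ∫ _x : ℝ, (1:ℂ) ∂μ :=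
    integral_prod_mul (fun x : ℝ => (x:ℂ) * cf a x) (fun _ : ℝ => (1:ℂ))
  have hone : (∫ _x : ℝ, (1:ℂ) ∂μ) = 1 := by simp
  have hB1val : (∫ p, B1 p ∂(μ.prod μ)) = -((V:ℂ) * Fa) - Fa * (V:ℂ) := by
    rw [show (fun p => B1 p) = B1 from rfl, hB1]
    rw [integral_add i123 i4, integral_sub i12 i3, integral_sub i1 i2,
      e1, e2, e3, e4, hCint0, hCsqV, ← hFa, ← hDa]
    ring
  have hB2val : (∫ p, B2 p ∂(μ.prod μ)) = Da + Da := by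
    rw [show (fun p => B2 p) = B2 from rfl, hB2]
    rw [integral_add i567 i8, integral_sub i56 i7, integral_sub i5 i6,
      e5, e6, e7, e8, hCint0, hone, ← hDa]
    ring
  have hval : (∫ p, H p ∂(μ.prod μ)) = (2*I/(a:ℂ)) * V * Fa - (2/(a:ℂ)^2) * Da := by
    rw [show (fun p => H p) = (fun p : ℝ × ℝ => (-I/(a:ℂ)) * B1 p - (1/(a:ℂ)^2) * B2 p)
      from funext hHexp]
    rw [integral_sub jcB1 jcB2, MeasureTheory.integral_const_mul, MeasureTheory.integral_const_mul, hB1val, hB2val]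
    ring
  -- exact identity
  have hid : I * Da + (a:ℂ) * (V:ℂ) * Fa = (-I*(a:ℂ)^2/2) * ∫ p, H p ∂(μ.prod μ) := by
    rw [hval]
    field_simp
    ring_nf
    simp only [Complex.I_sq]
    ring
  -- J bound
  have jint1 : Integrable (fun p : ℝ × ℝ => |p.1|^3 * 1) (μ.prod μ) :=
    hint.mul_prod (integrable_const 1)
  have jint2 : Integrable (fun p : ℝ × ℝ => 1 * |p.2|^3) (μ.prod μ) :=
    (integrable_const 1).mul_prod hint
  have jint3 : Integrable (fun p : ℝ × ℝ => p.1 * (p.2 * |p.2|)) (μ.prod μ) :=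
    hx.mul_prod hxabs
  have jint4 : Integrable (fun p : ℝ × ℝ => (p.1 * |p.1|) * p.2) (μ.prod μ) :=
    hxabs.mul_prod hx
  have jint12 : Integrable (fun p : ℝ × ℝ => |p.1|^3 * 1 + 1 * |p.2|^3) (μ.prod μ) := by
    exact jint1.add jint2
  have jint123 : Integrable (fun p : ℝ × ℝ => |p.1|^3 * 1 + 1 * |p.2|^3
      - p.1 * (p.2 * |p.2|)) (μ.prod μ) := by exact jint12.sub jint3
  have jint1234 : Integrable (fun p : ℝ × ℝ => |p.1|^3 * 1 + 1 * |p.2|^3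
      - p.1 * (p.2 * |p.2|) - (p.1 * |p.1|) * p.2) (μ.prod μ) := by exact jint123.sub jint4
  have jint : Integrable (fun p : ℝ × ℝ => (|p.1|^3 * 1 + 1 * |p.2|^3
      - p.1 * (p.2 * |p.2|) - (p.1 * |p.1|) * p.2)/2) (μ.prod μ) := by
    exact jint1234.div_const 2
  have hnorm : ‖∫ p, H p ∂(μ.prod μ)‖ ≤ β := by
    have step1 : ‖∫ p, H p ∂(μ.prod μ)‖ ≤ ∫ p, ‖H p‖ ∂(μ.prod μ) :=
      norm_integral_le_integral_norm _
    have step2 : (∫ p, ‖H p‖ ∂(μ.prod μ)) ≤ ∫ p : ℝ × ℝ,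
        ((|p.1|^3 * 1 + 1 * |p.2|^3 - p.1 * (p.2 * |p.2|) - (p.1 * |p.1|) * p.2)/2)
        ∂(μ.prod μ) := by
      apply integral_mono hHint.norm jint
      intro p
      show ‖H p‖ ≤ _
      have hb : ‖H p‖ ≤ (p.2 - p.1) * (p.2 * |p.2| - p.1 * |p.1|) / 2 := by
        rw [hH]; exact pointwise_bound ha p.1 p.2
      refine hb.trans (le_of_eq ?_)
      show (p.2 - p.1) * (p.2 * |p.2| - p.1 * |p.1|) / 2
        = (|p.1|^3 * 1 + 1 * |p.2|^3 - p.1 * (p.2 * |p.2|) - (p.1 * |p.1|) * p.2)/2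
      have e1' : |p.1|^3 = p.1^2 * |p.1| := by
        rw [pow_succ, _root_.sq_abs]
      have e2' : |p.2|^3 = p.2^2 * |p.2| := by
        rw [pow_succ, _root_.sq_abs]
      rw [e1', e2']; ring
    have step3 : (∫ p : ℝ × ℝ,
        ((|p.1|^3 * 1 + 1 * |p.2|^3 - p.1 * (p.2 * |p.2|) - (p.1 * |p.1|) * p.2)/2)
        ∂(μ.prod μ)) = β := by
      rw [MeasureTheory.integral_div]
      rw [integral_sub jint123 jint4, integral_sub jint12 jint3, integral_add jint1 jint2]
      rw [integral_prod_mul (fun x : ℝ => |x|^3) (fun _ : ℝ => (1:ℝ)),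
        integral_prod_mul (fun _ : ℝ => (1:ℝ)) (fun y : ℝ => |y|^3),
        integral_prod_mul (fun x : ℝ => x) (fun y : ℝ => y * |y|),
        integral_prod_mul (fun x : ℝ => x * |x|) (fun y : ℝ => y)]
      rw [hcent, MeasureTheory.integral_const]
      simp only [measure_univ, probReal_univ, ENNReal.toReal_one, one_smul, smul_eq_mul, one_mul, mul_one,
        mul_zero, zero_mul]
      rw [← hβ]
      ring
    calc ‖∫ p, H p ∂(μ.prod μ)‖ ≤ _ := step1
      _ ≤ _ := step2
      _ = β := step3
  rw [hid, norm_mul]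
  have hnn : ‖-I*(a:ℂ)^2/2‖ = a^2/2 := by
    rw [norm_div, norm_mul, norm_neg, Complex.norm_I, one_mul, norm_pow,
      Complex.norm_real, Real.norm_eq_abs, _root_.sq_abs]
    norm_num
  rw [hnn]
  calc a^2/2 * ‖∫ p, H p ∂(μ.prod μ)‖ ≤ a^2/2 * β :=
        mul_le_mul_of_nonneg_left hnorm (by positivity)
    _ = β * a^2 / 2 := by ring
end KeyAB

/-- The characteristic function of a probability measure on `ℝ`. -/
noncomputable def charFun (μ : Measure ℝ) (t : ℝ) : ℂ :=
  ∫ x, Complex.exp (t * x * Complex.I) ∂μ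

/-- If `E[X] = 0`, `E[X²] = σ²` and `E[|X|³] < ∞`, then
`|f(t) - exp(-σ²t²/2)| ≤ E[|X|³] |t|³ / 6` for all `t`. -/
theorem charFun_sub_gauss_le_third_moment
    (μ : Measure ℝ) [IsProbabilityMeasure μ] (σ : ℝ)
    (hcent : ∫ x, x ∂μ = 0)
    (hvar : ∫ x, x ^ 2 ∂μ = σ ^ 2)
    (hint : Integrable (fun x => |x| ^ 3) μ) :
    ∀ t : ℝ, ‖_root_.charFun μ t - Complex.exp (-(σ ^ 2 * t ^ 2) / 2)‖
      ≤ (∫ x, |x| ^ 3 ∂μ) * |t| ^ 3 / 6 := by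
  intro t
  -- integrability
  have hbound : Integrable (fun x => 1 + |x|^3) μ := (integrable_const 1).add hint
  have habs : Integrable (fun x => |x|) μ := by
    refine hbound.mono' continuous_abs.aestronglyMeasurable ?_
    filter_upwards with x
    rw [Real.norm_eq_abs, _root_.abs_abs]
    nlinarith [mul_nonneg (sq_nonneg (|x|-1)) (abs_nonneg x), sq_nonneg (|x|-1), sq_nonneg x]
  set V : ℝ := ∫ x, x^2 ∂μ with hV
  set β : ℝ := ∫ x, |x|^3 ∂μ with hβ
  have hV0 : 0 ≤ V := integral_nonneg fun x => sq_nonneg x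
  have hβ0 : 0 ≤ β := integral_nonneg fun x => by positivity
  set F : ℝ → ℂ := fun a => ∫ x, cf a x ∂μ with hF
  set D : ℝ → ℂ := fun a => ∫ x, (x:ℂ) * cf a x ∂μ with hD
  -- derivative of F
  have hFderiv : ∀ a : ℝ, HasDerivAt F (I * D a) a := by
    intro a
    have main := _root_.hasDerivAt_integral_of_dominated_loc_of_deriv_le
      (F := fun a x => cf a x) (F' := fun a x => (x:ℂ) * I * cf a x) (x₀ := a)
      (bound := fun x => |x|) (s := Metric.ball a 1) (Metric.ball_mem_nhds a one_pos)
      (Filter.Eventually.of_forall fun b => (cf_cont b).aestronglyMeasurable)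
      (by
        refine (integrable_const (1:ℝ)).mono' (cf_cont a).aestronglyMeasurable ?_
        filter_upwards with x
        rw [norm_cf])
      ((Complex.continuous_ofReal.mul continuous_const).mul (cf_cont a)
        |>.aestronglyMeasurable)
      (by
        filter_upwards with x b _
        rw [norm_mul, norm_cf, mul_one, norm_mul, Complex.norm_real, Real.norm_eq_abs,
          Complex.norm_I, mul_one])
      habs
      (by
        filter_upwards with x b _
        have h0 : HasDerivAt (fun c : ℝ => (c:ℂ)) 1 b := Complex.ofRealCLM.hasDerivAt
        have h1 : HasDerivAt (fun c : ℝ => (c:ℂ) * (x:ℂ) * I) ((x:ℂ) * I) b := by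
          simpa using (h0.mul_const (x:ℂ)).mul_const I
        have h2 := h1.cexp
        show HasDerivAt (fun c : ℝ => cf c x) ((x:ℂ) * I * cf b x) b
        unfold cf
        convert h2 using 1
        ring)
    have heq : (∫ x, (x:ℂ) * I * cf a x ∂μ) = I * D a := by
      rw [hD, ← MeasureTheory.integral_const_mul]
      congr 1; funext x; ring
    rw [← heq]
    exact main.2
  -- continuity of D
  have hDcont : Continuous D := by
    rw [hD]
    apply continuous_of_dominated (bound := fun x => |x|)
    · intro a
      exact (Complex.continuous_ofReal.mul (cf_cont a)).aestronglyMeasurable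
    · intro a
      filter_upwards with x
      rw [norm_mul, norm_cf, mul_one, Complex.norm_real, Real.norm_eq_abs]
    · exact habs
    · filter_upwards with x
      apply continuous_const.mul
      unfold cf; fun_prop
  have hFcont : Continuous F := by
    have : Differentiable ℝ F := fun a => (hFderiv a).differentiableAt
    exact this.continuous
  -- the interpolation
  set w : ℝ := V * t^2 / 2 with hw
  have hw0 : 0 ≤ w := by positivity
  set g : ℝ → ℂ := fun l => Complex.exp (((-((1-l^2) * w) : ℝ) : ℂ)) with hg
  set h : ℝ → ℂ := fun l => F (l*t) * g l with hh
  set h' : ℝ → ℂ := fun l =>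
    g l * ((t:ℂ) * (I * D (l*t) + ((l*t : ℝ):ℂ) * (V:ℂ) * F (l*t))) with hh'
  have hhderiv : ∀ l : ℝ, HasDerivAt h (h' l) l := by
    intro l
    have hF1 : HasDerivAt (fun l : ℝ => F (l*t)) (t • (I * D (l*t))) l := by
      have hg1 : HasDerivAt (fun l : ℝ => l*t) t l := by
        simpa using (hasDerivAt_id l).mul_const t
      exact (hFderiv (l*t)).scomp l hg1
    have hg2 : HasDerivAt (fun l : ℝ => -((1-l^2) * w)) (2*l*w) l := by
      have : HasDerivAt (fun l : ℝ => (1-l^2) * w) (-(2*l)*w) l := by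
        have h1 : HasDerivAt (fun l : ℝ => 1-l^2) (-(2*l)) l := by
          simpa using ((hasDerivAt_pow 2 l).const_sub 1)
        exact h1.mul_const w
      exact this.neg.congr_deriv (by ring)
    have hg3 : HasDerivAt g (((2*l*w : ℝ):ℂ) * g l) l := by
      rw [hg]
      have h4 := (hg2.ofReal_comp).cexp
      convert h4 using 1
      ring
    have := hF1.mul hg3
    rw [hh]
    refine this.congr_deriv ?_
    simp only [hh', hw, real_smul]
    push_cast
    ring
  have hh'cont : Continuous h' := by
    rw [hh']
    apply Continuous.mul
    · rw [hg]
      fun_prop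
    · apply Continuous.mul continuous_const
      apply Continuous.add
      · exact continuous_const.mul (hDcont.comp (continuous_id.mul continuous_const))
      · apply Continuous.mul
        · apply Continuous.mul _ continuous_const
          fun_prop
        · exact hFcont.comp (continuous_id.mul continuous_const)
  have hFTC : h 1 - h 0 = ∫ l in (0:ℝ)..1, h' l :=
    (integral_eq_sub_of_hasDerivAt (fun l _ => hhderiv l)
      (hh'cont.intervalIntegrable 0 1)).symm
  have hh1 : h 1 = _root_.charFun μ t := by
    have hz : ((-((1-(1:ℝ)^2) * w) : ℝ) : ℂ) = 0 := by norm_num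
    simp only [hh, hg, one_mul, hz, Complex.exp_zero, mul_one]
    rfl
  have hh0 : h 0 = Complex.exp (((-w : ℝ) : ℂ)) := by
    have hF0 : F 0 = 1 := by
      rw [hF]
      show (∫ x, cf 0 x ∂μ) = 1
      have hcf0 : (fun x : ℝ => cf 0 x) = fun _ : ℝ => (1:ℂ) := by
        funext x; simp [cf]
      rw [hcf0]
      simp
    simp only [hh, hg, zero_mul, hF0, one_mul]
    norm_num
  -- norm bound on h'
  have hnormbound : ‖∫ l in (0:ℝ)..1, h' l‖ ≤ β * |t|^3 / 6 := by
    have hb : ∀ l ∈ Set.Ioc (0:ℝ) 1, ‖h' l‖ ≤ (β * |t|^3 / 2) * l^2 := by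
      intro l hl
      simp only [hh', norm_mul, Complex.norm_real, Real.norm_eq_abs]
      have hgnorm : ‖g l‖ ≤ 1 := by
        simp only [hg, Complex.norm_exp, Complex.ofReal_re]
        rw [Real.exp_le_one_iff]
        nlinarith [hl.1, hl.2, hw0, mul_nonneg (by nlinarith [hl.1, hl.2] : (0:ℝ) ≤ 1 - l^2) hw0]
      have hkey : ‖I * D (l*t) + ((l*t : ℝ):ℂ) * (V:ℂ) * F (l*t)‖
          ≤ β * (l*t)^2 / 2 := by
        have hthis := keyA μ hcent hint (l*t)
        rw [← hV, ← hβ] at hthis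
        exact hthis
      calc ‖g l‖ * (|t| * ‖I * D (l*t) + ((l*t : ℝ):ℂ) * (V:ℂ) * F (l*t)‖)
          ≤ 1 * (|t| * (β * (l*t)^2 / 2)) := by
            apply mul_le_mul hgnorm _ (by positivity) zero_le_one
            exact mul_le_mul_of_nonneg_left hkey (abs_nonneg t)
        _ = (β * |t|^3 / 2) * l^2 := by
            rw [mul_pow, show |t|^3 = |t| * t^2 by
              rw [pow_succ, _root_.sq_abs, pow_two]; ring]
            ring
    have hle := intervalIntegral.norm_integral_le_of_norm_le
      (f := h') (g := fun l => (β * |t|^3 / 2) * l^2) (a := 0) (b := 1) (μ := volume)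
      zero_le_one
      (by
        filter_upwards with l hl
        exact hb l hl)
      (by apply Continuous.intervalIntegrable; fun_prop)
    have hcomp : (∫ l in (0:ℝ)..1, (β * |t|^3 / 2) * l^2) = β * |t|^3 / 6 := by
      rw [intervalIntegral.integral_const_mul, integral_pow]
      norm_num
      ring
    rw [hcomp] at hle
    calc ‖∫ l in (0:ℝ)..1, h' l‖ ≤ |β * |t|^3 / 6| := hle.trans (le_abs_self _)
      _ = β * |t|^3 / 6 := by
        rw [_root_.abs_of_nonneg (by positivity)]
  -- conclude
  have hfinal : _root_.charFun μ t - Complex.exp (((-w : ℝ) : ℂ)) = ∫ l in (0:ℝ)..1, h' l := by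
    rw [← hh1, ← hh0]; exact hFTC
  have hexp_eq : Complex.exp (((-w : ℝ) : ℂ)) = Complex.exp (-(σ ^ 2 * t ^ 2) / 2) := by
    congr 1
    rw [hw, hvar]
    push_cast
    ring
  rw [← hexp_eq, hfinal]
  exact hnormbound
end

section
/- Let 0 ≤ l ≤ m, p ≥ 1, q > 0, T > 0, and Δ := (1 - 4χ_1 - sqrt(K/n))/2 for constants K > 0, n ≥ 1, with χ_1 := sup_{x>0} x^{-3}|cos(x)-1+x^2/2|. Suppose m ≤ q. If Δ ≠ 0, then using |Ψ(t)| ≤ 1.0253/(2π|t|), (1/T) ∫_l^m |Ψ(u/T)| u^p exp(-(u^2/2)(1 - (4χ_1/q)u - sqrt(K/n))) du ≤ (1.0253/(4π)) |Δ|^{-p/2} |γ(p/2, Δ m^2) - γ(p/2, Δ l^2)|, where γ(a,x) := ∫_0^x |v|^{a-1} e^{-v} dv is the (extended) lower incomplete Gamma function. -/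
open MeasureTheory Real Set intervalIntegral

/-- Prawitz's kernel `Ψ(t) = ½(1-|t| + i[(1-|t|)cot(πt) + sign(t)/π])` for
`0 < |t| ≤ 1`, and `0` otherwise. -/
noncomputable def Psi (t : ℝ) : ℂ :=
  if 0 < |t| ∧ |t| ≤ 1 then
    (1 / 2 : ℂ) * (1 - |t| + Complex.I *
      ((1 - |t|) * Real.cot (π * t) + Real.sign t / π))
  else 0

/-- `χ₁ := sup_{x>0} x⁻³ |cos x - 1 + x²/2|`. -/
noncomputable def chi1 : ℝ :=
  ⨆ x : {x : ℝ // 0 < x}, |Real.cos x - 1 + (x : ℝ) ^ 2 / 2| / (x : ℝ) ^ 3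

/-- (Extended) lower incomplete Gamma function `γ(a,x) = ∫_0^x |v|^{a-1} e^{-v} dv`. -/
noncomputable def lGamma (a x : ℝ) : ℝ := ∫ v in (0 : ℝ)..x, |v| ^ (a - 1) * Real.exp (-v)

lemma abs_rpow_intInt {r : ℝ} (hr : -1 < r) (a b : ℝ) :
    IntervalIntegrable (fun x : ℝ => |x| ^ r) volume a b := by
  suffices h : ∀ c : ℝ, IntervalIntegrable (fun x : ℝ => |x| ^ r) volume 0 c by
    exact (h a).symm.trans (h b)
  have hpos : ∀ c : ℝ, 0 ≤ c → IntervalIntegrable (fun x : ℝ => |x| ^ r) volume 0 c := by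
    intro c hc
    have h := intervalIntegrable_rpow' hr (a := 0) (b := c)
    rw [intervalIntegrable_iff] at h ⊢
    apply h.congr_fun ?_ measurableSet_uIoc
    intro x hx
    rw [uIoc_of_le hc] at hx
    simp [abs_of_pos hx.1]
  intro c
  rcases le_total 0 c with hc | hc
  · exact hpos c hc
  · rw [IntervalIntegrable.iff_comp_neg]
    simpa using hpos (-c) (by linarith)

lemma g_intInt {r : ℝ} (hr : -1 < r) (a b : ℝ) :
    IntervalIntegrable (fun v : ℝ => |v| ^ r * Real.exp (-v)) volume a b :=
  (abs_rpow_intInt hr a b).mul_continuousOn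
    (Continuous.continuousOn (by continuity))

lemma sq_image_pos {Δ l m : ℝ} (hΔ : 0 < Δ) (hl : 0 ≤ l) (hlm : l ≤ m) :
    (fun u : ℝ => Δ * u ^ 2) '' Ioc l m = Ioc (Δ * l ^ 2) (Δ * m ^ 2) := by
  ext v
  simp only [mem_image, mem_Ioc]
  constructor
  · rintro ⟨u, ⟨h1, h2⟩, rfl⟩
    have hu0 : 0 < u := lt_of_le_of_lt hl h1
    constructor
    · exact mul_lt_mul_of_pos_left (by nlinarith : l ^ 2 < u ^ 2) hΔ
    · exact mul_le_mul_of_nonneg_left (by nlinarith : u ^ 2 ≤ m ^ 2) hΔ.le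
  · rintro ⟨h1, h2⟩
    have hv : 0 ≤ v := le_trans (by positivity) h1.le
    refine ⟨Real.sqrt (v / Δ), ⟨?_, ?_⟩, ?_⟩
    · have h : l ^ 2 < v / Δ := by rw [lt_div_iff₀ hΔ]; nlinarith
      calc l = Real.sqrt (l ^ 2) := (Real.sqrt_sq hl).symm
        _ < Real.sqrt (v / Δ) := Real.sqrt_lt_sqrt (by positivity) h
    · have hm : 0 ≤ m := le_trans hl hlm
      have h : v / Δ ≤ m ^ 2 := by rw [div_le_iff₀ hΔ]; nlinarith
      calc Real.sqrt (v / Δ) ≤ Real.sqrt (m ^ 2) := Real.sqrt_le_sqrt h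
        _ = m := Real.sqrt_sq hm
    · have h := Real.sq_sqrt (by positivity : (0:ℝ) ≤ v / Δ)
      rw [h, mul_comm, div_mul_cancel₀ v hΔ.ne']

lemma sq_image_neg {Δ l m : ℝ} (hΔ : Δ < 0) (hl : 0 ≤ l) (hlm : l ≤ m) :
    (fun u : ℝ => Δ * u ^ 2) '' Ioc l m = Ico (Δ * m ^ 2) (Δ * l ^ 2) := by
  ext v
  simp only [mem_image, mem_Ioc, mem_Ico]
  constructor
  · rintro ⟨u, ⟨h1, h2⟩, rfl⟩
    have hu0 : 0 < u := lt_of_le_of_lt hl h1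
    constructor
    · nlinarith [mul_nonneg (neg_nonneg.2 hΔ.le) (show (0:ℝ) ≤ m ^ 2 - u ^ 2 by nlinarith)]
    · nlinarith [mul_pos (neg_pos.2 hΔ) (show (0:ℝ) < u ^ 2 - l ^ 2 by nlinarith)]
  · rintro ⟨h1, h2⟩
    have hv : v ≤ 0 :=
      le_trans h2.le (mul_nonpos_of_nonpos_of_nonneg hΔ.le (sq_nonneg l))
    have hΔ' : 0 < -Δ := by linarith
    have hvd : 0 ≤ v / Δ := by
      rw [le_div_iff_of_neg hΔ]; simpa using hv
    refine ⟨Real.sqrt (v / Δ), ⟨?_, ?_⟩, ?_⟩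
    · have h : l ^ 2 < v / Δ := by
        rw [lt_div_iff_of_neg hΔ]; nlinarith
      calc l = Real.sqrt (l ^ 2) := (Real.sqrt_sq hl).symm
        _ < Real.sqrt (v / Δ) := Real.sqrt_lt_sqrt (by positivity) h
    · have hm : 0 ≤ m := le_trans hl hlm
      have h : v / Δ ≤ m ^ 2 := by
        rw [div_le_iff_of_neg hΔ]; nlinarith
      calc Real.sqrt (v / Δ) ≤ Real.sqrt (m ^ 2) := Real.sqrt_le_sqrt h
        _ = m := Real.sqrt_sq hm
    · have h := Real.sq_sqrt hvd
      rw [h, mul_comm, div_mul_cancel₀ v hΔ.ne]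

/-- Key substitution `v = Δ u²`. -/
lemma key_subst (p Δ l m : ℝ) (hp : 1 ≤ p) (hl : 0 ≤ l) (hlm : l ≤ m) (hΔ0 : Δ ≠ 0) :
    ∫ u in Ioc l m, u ^ (p - 1) * Real.exp (-(Δ * u ^ 2))
      = |Δ| ^ (-(p / 2)) / 2 *
          |lGamma (p / 2) (Δ * m ^ 2) - lGamma (p / 2) (Δ * l ^ 2)| := by
  have hr : (-1 : ℝ) < p / 2 - 1 := by linarith
  set g : ℝ → ℝ := fun v => |v| ^ (p / 2 - 1) * Real.exp (-v) with hg
  have hΔa : 0 < |Δ| := abs_pos.mpr hΔ0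
  -- change of variables
  have hderiv : ∀ u ∈ Ioc l m,
      HasDerivWithinAt (fun u : ℝ => Δ * u ^ 2) (2 * Δ * u) (Ioc l m) u := by
    intro u _
    have : HasDerivAt (fun u : ℝ => Δ * u ^ 2) (Δ * (2 * u)) u := by
      simpa using (hasDerivAt_pow 2 u).const_mul Δ
    exact (this.congr_deriv (by ring)).hasDerivWithinAt
  have hinj : InjOn (fun u : ℝ => Δ * u ^ 2) (Ioc l m) := by
    intro x hx y hy h
    have hx0 : 0 < x := lt_of_le_of_lt hl hx.1
    have hy0 : 0 < y := lt_of_le_of_lt hl hy.1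
    have h2 : x ^ 2 = y ^ 2 := mul_left_cancel₀ hΔ0 h
    calc x = Real.sqrt (x ^ 2) := (Real.sqrt_sq hx0.le).symm
      _ = Real.sqrt (y ^ 2) := by rw [h2]
      _ = y := Real.sqrt_sq hy0.le
  have hCoV := integral_image_eq_integral_abs_deriv_smul measurableSet_Ioc hderiv hinj g
  -- simplify RHS of change of variables
  have hRHS : (∫ u in Ioc l m, |2 * Δ * u| • g (Δ * u ^ 2))
      = 2 * |Δ| ^ (p / 2) * ∫ u in Ioc l m, u ^ (p - 1) * Real.exp (-(Δ * u ^ 2)) := by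
    rw [← MeasureTheory.integral_const_mul]
    apply setIntegral_congr_fun measurableSet_Ioc
    intro u hu
    have hu0 : 0 < u := lt_of_le_of_lt hl hu.1
    simp only [hg, smul_eq_mul]
    have e1 : |2 * Δ * u| = 2 * |Δ| * u := by
      rw [abs_mul, abs_mul, abs_of_pos hu0]; norm_num
    have e2 : |Δ * u ^ 2| = |Δ| * u ^ 2 := by
      rw [abs_mul, abs_of_pos (by positivity : (0:ℝ) < u ^ 2)]
    have e3 : (|Δ| * u ^ 2) ^ (p / 2 - 1) = |Δ| ^ (p / 2 - 1) * u ^ (p - 2) := by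
      rw [Real.mul_rpow hΔa.le (by positivity), ← Real.rpow_natCast u 2,
        ← Real.rpow_mul hu0.le, show ((2:ℕ):ℝ) * (p / 2 - 1) = p - 2 from by push_cast; ring]
    have e4 : |Δ| ^ (p / 2 - 1) * |Δ| = |Δ| ^ (p / 2) := by
      nth_rewrite 2 [← Real.rpow_one |Δ|]
      rw [← Real.rpow_add hΔa, show p / 2 - 1 + 1 = p / 2 from by ring]
    have e5 : u ^ (p - 2) * u = u ^ (p - 1) := by
      nth_rewrite 2 [← Real.rpow_one u]
      rw [← Real.rpow_add hu0, show p - 2 + 1 = p - 1 from by ring]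
    rw [e1, e2, e3]
    calc 2 * |Δ| * u * (|Δ| ^ (p / 2 - 1) * u ^ (p - 2) * Real.exp (-(Δ * u ^ 2)))
        = 2 * (|Δ| ^ (p / 2 - 1) * |Δ|) * (u ^ (p - 2) * u)
            * Real.exp (-(Δ * u ^ 2)) := by ring
      _ = 2 * |Δ| ^ (p / 2) * (u ^ (p - 1) * Real.exp (-(Δ * u ^ 2))) := by
          rw [e4, e5]; ring
  -- nonnegativity of g
  have hgnn : ∀ v, 0 ≤ g v := fun v => by positivity
  have hint0 : ∀ c : ℝ, IntervalIntegrable g volume 0 c := fun c => g_intInt hr 0 c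
  have hlg : ∀ x : ℝ, lGamma (p / 2) x = ∫ v in (0:ℝ)..x, g v := fun x => rfl
  have habs : ∫ v in (fun u : ℝ => Δ * u ^ 2) '' Ioc l m, g v
      = |lGamma (p / 2) (Δ * m ^ 2) - lGamma (p / 2) (Δ * l ^ 2)| := by
    simp only [hlg]
    rcases lt_or_gt_of_ne hΔ0 with hneg | hpos
    · rw [sq_image_neg hneg hl hlm]
      have hle : Δ * m ^ 2 ≤ Δ * l ^ 2 := by
        nlinarith [mul_nonneg (neg_nonneg.2 hneg.le) (show (0:ℝ) ≤ m ^ 2 - l ^ 2 by nlinarith)]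
      have h1 : ∫ v in Ico (Δ * m ^ 2) (Δ * l ^ 2), g v
          = ∫ v in Ioc (Δ * m ^ 2) (Δ * l ^ 2), g v := by
        rw [integral_Ico_eq_integral_Ioo, integral_Ioc_eq_integral_Ioo]
      rw [h1, ← intervalIntegral.integral_of_le hle,
        ← intervalIntegral.integral_interval_sub_left (hint0 _) (hint0 _)]
      have hnn : 0 ≤ ∫ v in (Δ * m ^ 2)..(Δ * l ^ 2), g v :=
        intervalIntegral.integral_nonneg hle fun v _ => hgnn v
      rw [← intervalIntegral.integral_interval_sub_left (hint0 _) (hint0 _)] at hnn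
      rw [abs_sub_comm, abs_of_nonneg hnn]
    · rw [sq_image_pos hpos hl hlm]
      have hle : Δ * l ^ 2 ≤ Δ * m ^ 2 :=
        mul_le_mul_of_nonneg_left (by nlinarith : l ^ 2 ≤ m ^ 2) hpos.le
      rw [← intervalIntegral.integral_of_le hle,
        ← intervalIntegral.integral_interval_sub_left (hint0 _) (hint0 _)]
      have hnn : 0 ≤ ∫ v in (Δ * l ^ 2)..(Δ * m ^ 2), g v :=
        intervalIntegral.integral_nonneg hle fun v _ => hgnn v
      rw [← intervalIntegral.integral_interval_sub_left (hint0 _) (hint0 _)] at hnn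
      rw [abs_of_nonneg hnn]
  have h2ne : (2 * |Δ| ^ (p / 2)) ≠ 0 := by positivity
  have hinv : |Δ| ^ (-(p / 2)) = (|Δ| ^ (p / 2))⁻¹ := Real.rpow_neg hΔa.le _
  have : 2 * |Δ| ^ (p / 2) * ∫ u in Ioc l m, u ^ (p - 1) * Real.exp (-(Δ * u ^ 2))
      = |lGamma (p / 2) (Δ * m ^ 2) - lGamma (p / 2) (Δ * l ^ 2)| := by
    rw [← hRHS, ← hCoV, habs]
  rw [← this, hinv]
  field_simp

/-- With `Δ := (1 - 4χ₁ - √(K/n))/2 ≠ 0`, one has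
`T⁻¹ ∫_l^m |Ψ(u/T)| uᵖ exp(-(u²/2)(1 - (4χ₁/q)u - √(K/n))) du
  ≤ (1.0253/(4π)) |Δ|^{-p/2} |γ(p/2, Δm²) - γ(p/2, Δl²)|`. -/
theorem J2_bound (p l m q T K n Δ : ℝ)
    (hl : 0 ≤ l) (hlm : l ≤ m) (hmq : m ≤ q) (hp : 1 ≤ p) (hq : 0 < q) (hT : 0 < T)
    (hK : 0 < K) (hn : 1 ≤ n)
    (hΔ : Δ = (1 - 4 * chi1 - Real.sqrt (K / n)) / 2) (hΔ0 : Δ ≠ 0)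
    (hPsi : ∀ t : ℝ, t ≠ 0 → ‖Psi t‖ ≤ 1.0253 / (2 * π * |t|)) :
    (1 / T) * ∫ u in l..m, ‖Psi (u / T)‖ * u ^ p *
        Real.exp (-(u ^ 2 / 2) * (1 - 4 * chi1 / q * u - Real.sqrt (K / n)))
      ≤ 1.0253 / (4 * π) * |Δ| ^ (-(p / 2)) *
          |lGamma (p / 2) (Δ * m ^ 2) - lGamma (p / 2) (Δ * l ^ 2)| := by
  have hπ : 0 < π := Real.pi_pos
  have hchi : 0 ≤ chi1 := Real.iSup_nonneg fun x => div_nonneg (abs_nonneg _) (pow_nonneg x.2.le 3)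
  set C : ℝ := 1.0253 / (2 * π) with hC
  have hC0 : 0 < C := by positivity
  set s := Real.sqrt (K / n) with hs
  set f : ℝ → ℝ := fun u => ‖Psi (u / T)‖ * u ^ p *
      Real.exp (-(u ^ 2 / 2) * (1 - 4 * chi1 / q * u - s)) with hf
  set G : ℝ → ℝ := fun u => C * (u ^ (p - 1) * Real.exp (-(Δ * u ^ 2))) with hG
  -- pointwise bound on Ioc l m
  have hpoint : ∀ u ∈ Ioc l m, 1 / T * f u ≤ G u := by
    intro u hu
    have hu0 : 0 < u := lt_of_le_of_lt hl hu.1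
    have huT : (0:ℝ) < u / T := by positivity
    have hb := hPsi (u / T) huT.ne'
    rw [abs_of_pos huT] at hb
    have hup : (0:ℝ) < u ^ p := Real.rpow_pos_of_pos hu0 p
    have hexp : Real.exp (-(u ^ 2 / 2) * (1 - 4 * chi1 / q * u - s))
        ≤ Real.exp (-(Δ * u ^ 2)) := by
      apply Real.exp_le_exp.2
      have h1 : 4 * chi1 / q * u ≤ 4 * chi1 := by
        rw [div_mul_eq_mul_div, div_le_iff₀ hq]
        have : u ≤ q := le_trans hu.2 hmq
        nlinarith
      rw [hΔ]
      nlinarith [sq_nonneg u, mul_nonneg (sq_nonneg u) (sub_nonneg.2 h1)]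
    calc 1 / T * f u ≤ 1 / T * (1.0253 / (2 * π * (u / T)) * u ^ p *
          Real.exp (-(u ^ 2 / 2) * (1 - 4 * chi1 / q * u - s))) := by
          have hfu : f u = ‖Psi (u / T)‖ * u ^ p *
              Real.exp (-(u ^ 2 / 2) * (1 - 4 * chi1 / q * u - s)) := rfl
          rw [hfu]
          have h2 : (0:ℝ) ≤ Real.exp (-(u ^ 2 / 2) * (1 - 4 * chi1 / q * u - s)) :=
            (Real.exp_pos _).le
          have h3 : (0:ℝ) < 1 / T := by positivity
          gcongr
      _ = C * (u ^ (p - 1) *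
          Real.exp (-(u ^ 2 / 2) * (1 - 4 * chi1 / q * u - s))) := by
          have hup' : u ^ p = u ^ (p - 1) * u := by
            rw [← Real.rpow_add_one hu0.ne' (p - 1)]; norm_num
          rw [hup', hC]
          field_simp
      _ ≤ G u :=
          mul_le_mul_of_nonneg_left
            (mul_le_mul_of_nonneg_left hexp (Real.rpow_nonneg hu0.le _)) hC0.le
  -- integrability of G on Ioc l m
  have hGc : Continuous G := by
    apply Continuous.mul continuous_const
    exact (Real.continuous_rpow_const (by linarith)).mul
      (Real.continuous_exp.comp (by continuity))
  have hGint : IntegrableOn G (Ioc l m) := hGc.integrableOn_Ioc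
  -- main inequality
  rw [intervalIntegral.integral_of_le hlm, ← MeasureTheory.integral_const_mul]
  have hle : ∫ u in Ioc l m, 1 / T * f u ≤ ∫ u in Ioc l m, G u := by
    apply MeasureTheory.integral_mono_of_nonneg
    · rw [Filter.EventuallyLE, ae_restrict_iff' measurableSet_Ioc]
      filter_upwards with u hu
      have hu0 : 0 < u := lt_of_le_of_lt hl hu.1
      have : (0:ℝ) < u ^ p := Real.rpow_pos_of_pos hu0 p
      simp only [hf, Pi.zero_apply]
      positivity
    · exact hGint
    · rw [Filter.EventuallyLE, ae_restrict_iff' measurableSet_Ioc]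
      filter_upwards with u hu
      exact hpoint u hu
  refine le_trans hle ?_
  have : ∫ u in Ioc l m, G u
      = C * ∫ u in Ioc l m, u ^ (p - 1) * Real.exp (-(Δ * u ^ 2)) :=
    MeasureTheory.integral_const_mul C _
  rw [this, key_subst p Δ l m hp hl hlm hΔ0, hC]
  rw [show (1.0253:ℝ) / (2 * π) * (|Δ| ^ (-(p / 2)) / 2 *
      |lGamma (p / 2) (Δ * m ^ 2) - lGamma (p / 2) (Δ * l ^ 2)|)
    = 1.0253 / (4 * π) * |Δ| ^ (-(p / 2)) *
      |lGamma (p / 2) (Δ * m ^ 2) - lGamma (p / 2) (Δ * l ^ 2)| from by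
    field_simp; ring]
end
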